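/- (Eventual suboptimality of increasing the limit when the mean is finite.) Let Y > 0 be a random variable with a continuous density on (0, ∞) and survival function S_Y(t) = l(t)·t^{−1/γ}, where γ ∈ (0, 1) and l is slowly varying, so that π⁺ := E[Y] < ∞. Let L : ℝ → ℝ be continuously differentiable, nondecreasing, with L and L′ bounded and L′ continuous, and let f : ℝ → ℝ be continuously differentiable and nondecreasing with f′ continuous. Define π(s) = ∫₀^s S_Y(t) dt and 𝔏(s) = E[L(min(Y, s)/Y − f(π(s)))]. If f′(π⁺) > 0 and L′(1 − f(π⁺)) > 0, then there exists s₀ > 0 such that 𝔏 is strictly decreasing on [s₀, ∞). -/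

import Mathlib

open MeasureTheory Set Filter
open Topology

/-- Survival function `S_Y(t) = P(Y > t)` of a random variable `Y`. -/
noncomputable def survival {Ω : Type*} [MeasurableSpace Ω] (μ : Measure Ω)
    (Y : Ω → ℝ) (t : ℝ) : ℝ :=
  (μ {ω | t < Y ω}).toReal

/-- Pure premium `π(s) = ∫₀^s S_Y(t) dt = E[min(Y, s)]` of the capped contract. -/
noncomputable def cappedPremium {Ω : Type*} [MeasurableSpace Ω] (μ : Measure Ω)
    (Y : Ω → ℝ) (s : ℝ) : ℝ :=
  ∫ t in Ioc (0:ℝ) s, survival μ Y t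

/-- Objective `𝔏(s) = E[L(min(Y, s)/Y − f(π(s)))]` of the capped contract. -/
noncomputable def cappedObjective {Ω : Type*} [MeasurableSpace Ω] (μ : Measure Ω)
    (Y : Ω → ℝ) (L f : ℝ → ℝ) (s : ℝ) : ℝ :=
  ∫ ω, L (min (Y ω) s / Y ω - f (cappedPremium μ Y s)) ∂μ


section pieces
variable {Ω : Type*} [MeasurableSpace Ω] (μ : Measure Ω) [IsProbabilityMeasure μ] (Y : Ω → ℝ)

lemma survival_antitone : Antitone (survival μ Y) := fun t₁ t₂ h =>
  ENNReal.toReal_mono (measure_ne_top μ _)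
    (measure_mono (fun ω hω => lt_of_le_of_lt h hω))

lemma survival_nonneg (t : ℝ) : 0 ≤ survival μ Y t := ENNReal.toReal_nonneg

lemma survival_le_one (t : ℝ) : survival μ Y t ≤ 1 := by
  have h := ENNReal.toReal_mono (measure_ne_top μ univ)
    (measure_mono (subset_univ {ω | t < Y ω}))
  rwa [measure_univ, ENNReal.toReal_one] at h

lemma survival_measurable : Measurable (survival μ Y) :=
  (survival_antitone μ Y).measurable

lemma compl_toReal {s : ℝ} (hY : Measurable Y) :
    (μ {ω | Y ω ≤ s}).toReal = 1 - survival μ Y s := by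
  have hE : MeasurableSet {ω | Y ω ≤ s} := measurableSet_le hY measurable_const
  have h := measure_add_measure_compl (μ := μ) hE
  rw [measure_univ] at h
  have hcompl : {ω | Y ω ≤ s}ᶜ = {ω | s < Y ω} := by ext ω; simp [not_le]
  have h2 := congrArg ENNReal.toReal h
  rw [ENNReal.toReal_add (measure_ne_top μ _) (measure_ne_top μ _), hcompl,
    ENNReal.toReal_one] at h2
  simp only [survival]
  linarith

end pieces

section pieces2
variable {Ω : Type*} [MeasurableSpace Ω] (μ : Measure Ω) [IsProbabilityMeasure μ] (Y : Ω → ℝ)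

lemma Y_pos_ae (hY : Measurable Y) (p : ℝ → ℝ)
    (hdens : μ.map Y
      = (volume.restrict (Ioi (0:ℝ))).withDensity (fun t => ENNReal.ofReal (p t))) :
    ∀ᵐ ω ∂μ, 0 < Y ω := by
  rw [ae_iff]
  have h1 : {ω | ¬ 0 < Y ω} = Y ⁻¹' (Iic 0) := by ext; simp [not_lt]
  rw [h1, ← Measure.map_apply hY measurableSet_Iic, hdens,
    withDensity_apply _ measurableSet_Iic,
    Measure.restrict_restrict measurableSet_Iic]
  have : Iic (0:ℝ) ∩ Ioi 0 = ∅ := by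
    ext x; simp only [mem_inter_iff, mem_Iic, mem_Ioi, mem_empty_iff_false, iff_false]
    intro ⟨h1, h2⟩; linarith
  rw [this]
  simp

/-- If the survival function is integrable on `(0,∞)`, then `Y` is integrable and its
mean is the integral of the survival function. -/
lemma mean_eq_integral_survival (hY : Measurable Y) (hY0 : ∀ᵐ ω ∂μ, 0 < Y ω)
    (hSint : IntegrableOn (survival μ Y) (Ioi 0) volume) :
    Integrable Y μ ∧ ∫ ω, Y ω ∂μ = ∫ t in Ioi (0:ℝ), survival μ Y t := by
  have hYnn : 0 ≤ᵐ[μ] Y := hY0.mono fun ω h => h.le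
  have hSnn : 0 ≤ᵐ[volume.restrict (Ioi (0:ℝ))] survival μ Y :=
    Eventually.of_forall (survival_nonneg μ Y)
  have key := lintegral_eq_lintegral_meas_lt μ hYnn hY.aemeasurable
  have hrw : ∫⁻ t in Ioi (0:ℝ), μ {a | t < Y a}
      = ∫⁻ t in Ioi (0:ℝ), ENNReal.ofReal (survival μ Y t) := by
    apply lintegral_congr_ae
    filter_upwards with t
    rw [survival, ENNReal.ofReal_toReal (measure_ne_top μ _)]
  have hofReal := ofReal_integral_eq_lintegral_ofReal hSint hSnn
  have hfin : ∫⁻ ω, ENNReal.ofReal (Y ω) ∂μ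
      = ENNReal.ofReal (∫ t in Ioi (0:ℝ), survival μ Y t) := by
    rw [key, hrw, ← hofReal]
  have hint : Integrable Y μ := by
    refine ⟨hY.aestronglyMeasurable, ?_⟩
    rw [hasFiniteIntegral_iff_norm]
    have : ∫⁻ ω, ENNReal.ofReal ‖Y ω‖ ∂μ = ∫⁻ ω, ENNReal.ofReal (Y ω) ∂μ := by
      apply lintegral_congr_ae
      filter_upwards [hY0] with ω hω
      rw [Real.norm_eq_abs, abs_of_pos hω]
    rw [this, hfin]
    exact ENNReal.ofReal_lt_top
  refine ⟨hint, ?_⟩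
  rw [hint.integral_eq_integral_meas_lt hYnn]
  rfl

end pieces2

section pieces3
variable {Ω : Type*} [MeasurableSpace Ω] (μ : Measure Ω) [IsProbabilityMeasure μ] (Y : Ω → ℝ)

lemma premium_split {s₁ s₂ : ℝ} (h0 : 0 < s₁) (h12 : s₁ ≤ s₂)
    (hSint : IntegrableOn (survival μ Y) (Ioi 0) volume) :
    cappedPremium μ Y s₂ = cappedPremium μ Y s₁ + ∫ t in Ioc s₁ s₂, survival μ Y t := by
  have hsub1 : Ioc (0:ℝ) s₁ ⊆ Ioi 0 := Ioc_subset_Ioi_self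
  have hsub2 : Ioc s₁ s₂ ⊆ Ioi 0 := fun x hx => lt_trans h0 hx.1
  rw [cappedPremium, cappedPremium, ← Ioc_union_Ioc_eq_Ioc h0.le h12,
    setIntegral_union (Set.Ioc_disjoint_Ioc_of_le le_rfl) measurableSet_Ioc
      (hSint.mono_set hsub1) (hSint.mono_set hsub2)]

lemma integral_Ioc_S_lb {s₁ s₂ : ℝ} (h0 : 0 < s₁) (h12 : s₁ ≤ s₂)
    (hSint : IntegrableOn (survival μ Y) (Ioi 0) volume) :
    (s₂ - s₁) * survival μ Y s₂ ≤ ∫ t in Ioc s₁ s₂, survival μ Y t := by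
  have hsub2 : Ioc s₁ s₂ ⊆ Ioi 0 := fun x hx => lt_trans h0 hx.1
  have h := setIntegral_mono_on (μ := volume) (s := Ioc s₁ s₂)
    (f := fun _ => survival μ Y s₂) (g := survival μ Y)
    (integrableOn_const measure_Ioc_lt_top.ne) (hSint.mono_set hsub2)
    measurableSet_Ioc (fun x hx => survival_antitone μ Y hx.2)
  rwa [setIntegral_const, measureReal_def, Real.volume_Ioc, smul_eq_mul,
    ENNReal.toReal_ofReal (by linarith)] at h

lemma integral_Ioc_S_ub {s₁ s₂ : ℝ} (h0 : 0 < s₁) (h12 : s₁ ≤ s₂)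
    (hSint : IntegrableOn (survival μ Y) (Ioi 0) volume) :
    ∫ t in Ioc s₁ s₂, survival μ Y t ≤ (s₂ - s₁) * survival μ Y s₁ := by
  have hsub2 : Ioc s₁ s₂ ⊆ Ioi 0 := fun x hx => lt_trans h0 hx.1
  have h := setIntegral_mono_on (μ := volume) (s := Ioc s₁ s₂)
    (f := survival μ Y) (g := fun _ => survival μ Y s₁)
    (hSint.mono_set hsub2) (integrableOn_const measure_Ioc_lt_top.ne)
    measurableSet_Ioc (fun x hx => survival_antitone μ Y hx.1.le)
  rwa [setIntegral_const, measureReal_def, Real.volume_Ioc, smul_eq_mul,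
    ENNReal.toReal_ofReal (by linarith)] at h

lemma premium_le (s : ℝ)
    (hSint : IntegrableOn (survival μ Y) (Ioi 0) volume) :
    cappedPremium μ Y s ≤ ∫ t in Ioi (0:ℝ), survival μ Y t :=
  setIntegral_mono_set hSint (Eventually.of_forall (survival_nonneg μ Y))
    (HasSubset.Subset.eventuallyLE Ioc_subset_Ioi_self)

lemma premium_tail {s : ℝ} (h0 : 0 < s)
    (hSint : IntegrableOn (survival μ Y) (Ioi 0) volume) :
    (∫ t in Ioi (0:ℝ), survival μ Y t) - cappedPremium μ Y s
      = ∫ t in Ioi s, survival μ Y t := by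
  have : ∫ t in Ioi (0:ℝ), survival μ Y t
      = cappedPremium μ Y s + ∫ t in Ioi s, survival μ Y t := by
    rw [cappedPremium, ← Ioc_union_Ioi_eq_Ioi h0.le,
      setIntegral_union Set.Ioc_disjoint_Ioi_same measurableSet_Ioi
        (hSint.mono_set Ioc_subset_Ioi_self) (hSint.mono_set (Ioi_subset_Ioi h0.le))]
  linarith

end pieces3


private lemma aux_strictAntiOn {g : ℝ → ℝ} {s₀ : ℝ} (hs₀ : 0 < s₀)
    (h : ∀ a b : ℝ, s₀ ≤ a → a < b → b ≤ 2 * a → g b < g a) :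
    StrictAntiOn g (Ici s₀) := by
  have key : ∀ n : ℕ, ∀ a b : ℝ, s₀ ≤ a → a < b → b ≤ 2 ^ n * a → g b < g a := by
    intro n
    induction n with
    | zero => intro a b ha hab hb; norm_num at hb; linarith
    | succ n ih =>
      intro a b ha hab hb
      by_cases hc : b ≤ 2 * a
      · exact h a b ha hab hc
      · push_neg at hc
        have ha0 : 0 < a := lt_of_lt_of_le hs₀ ha
        have hb' : b ≤ 2 ^ n * (2 * a) := by
          calc b ≤ 2 ^ (n + 1) * a := hb
          _ = 2 ^ n * (2 * a) := by ring
        exact (ih (2 * a) b (by linarith) hc hb').trans (h a (2 * a) ha (by linarith) le_rfl)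
  intro a ha b hb hab
  obtain ⟨n, hn⟩ : ∃ n : ℕ, b / a < 2 ^ n := pow_unbounded_of_one_lt (b / a) (by norm_num)
  have ha0 : 0 < a := lt_of_lt_of_le hs₀ ha
  exact key n a b ha hab (le_of_lt (by rwa [div_lt_iff₀ ha0] at hn))

private lemma aux_deriv_window {F : ℝ → ℝ} (hF : ContDiff ℝ 1 F) {x c : ℝ}
    (hcd : c < deriv F x) :
    ∃ δ > (0:ℝ), ∀ u v : ℝ, u ∈ Icc (x - δ) (x + δ) → v ∈ Icc (x - δ) (x + δ) →
      u ≤ v → c * (v - u) ≤ F v - F u := by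
  have hcont : Continuous (deriv F) := hF.continuous_deriv le_rfl
  have hopen : IsOpen ((deriv F) ⁻¹' Ioi c) := isOpen_Ioi.preimage hcont
  obtain ⟨ε, hε, hball⟩ := Metric.isOpen_iff.1 hopen x hcd
  refine ⟨ε / 2, by positivity, fun u v hu hv huv => ?_⟩
  rcases eq_or_lt_of_le huv with rfl | hlt
  · simp
  have hdiff : Differentiable ℝ F := hF.differentiable one_ne_zero
  obtain ⟨ξ, hξ, hslope⟩ := exists_deriv_eq_slope F hlt (hdiff.continuous.continuousOn)
    (hdiff.differentiableOn)
  have hξball : ξ ∈ Metric.ball x ε := by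
    obtain ⟨h1, h2⟩ := hξ
    obtain ⟨hu1, hu2⟩ := hu; obtain ⟨hv1, hv2⟩ := hv
    rw [Metric.mem_ball, Real.dist_eq, abs_lt]
    constructor <;> nlinarith
  have : c < (F v - F u) / (v - u) := by
    have := hball hξball
    rw [mem_preimage, mem_Ioi] at this
    rwa [hslope] at this
  rw [lt_div_iff₀ (by linarith)] at this
  linarith

private lemma aux_lipschitz {L : ℝ → ℝ} {M : ℝ} (hL : ContDiff ℝ 1 L)
    (hM : ∀ x, |deriv L x| ≤ M) : ∀ a b : ℝ, L a - L b ≤ M * |a - b| := by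
  have hM0 : 0 ≤ M := le_trans (abs_nonneg _) (hM 0)
  have hlip : LipschitzWith M.toNNReal L := by
    apply lipschitzWith_of_nnnorm_deriv_le (hL.differentiable one_ne_zero)
    intro x
    rw [← NNReal.coe_le_coe, coe_nnnorm, Real.coe_toNNReal _ hM0, Real.norm_eq_abs]
    exact hM x
  intro a b
  have := hlip.dist_le_mul a b
  rw [Real.dist_eq, Real.dist_eq, Real.coe_toNNReal _ hM0] at this
  calc L a - L b ≤ |L a - L b| := le_abs_self _
  _ ≤ M * |a - b| := this


private lemma aux_geom_decay {S : ℝ → ℝ} {T r : ℝ} (hT : 0 < T) (hr0 : 0 < r) (hr1 : r < 1)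
    (hanti : Antitone S) (hST : 0 ≤ S T)
    (hdbl : ∀ t, T ≤ t → S (2 * t) ≤ r * S t) :
    ∀ t, T ≤ t → S t ≤ (S T * (2 * T) ^ (-(Real.logb 2 r))) * t ^ (Real.logb 2 r) := by
  set e := Real.logb 2 r with he
  have he0 : e < 0 := Real.logb_neg (by norm_num) hr0 hr1
  have h2e : (2:ℝ) ^ e = r := Real.rpow_logb (by norm_num) (by norm_num) hr0
  have pow_le : ∀ n : ℕ, S (2 ^ n * T) ≤ r ^ n * S T := by
    intro n
    induction n with
    | zero => simp
    | succ n ih =>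
      have h1 : (2:ℝ) ^ (n + 1) * T = 2 * (2 ^ n * T) := by ring
      have h2 : T ≤ 2 ^ n * T := le_mul_of_one_le_left hT.le (one_le_pow₀ (by norm_num))
      calc S (2 ^ (n + 1) * T) = S (2 * (2 ^ n * T)) := by rw [h1]
      _ ≤ r * S (2 ^ n * T) := hdbl _ h2
      _ ≤ r * (r ^ n * S T) := by exact mul_le_mul_of_nonneg_left ih hr0.le
      _ = r ^ (n + 1) * S T := by ring
  intro t ht
  have ht0 : 0 < t := lt_of_lt_of_le hT ht
  have htT : (1:ℝ) ≤ t / T := (one_le_div hT).2 ht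
  have hlog0 : 0 ≤ Real.logb 2 (t / T) := Real.logb_nonneg (by norm_num) htT
  set n := ⌊Real.logb 2 (t / T)⌋₊ with hn
  have h1 : (n:ℝ) ≤ Real.logb 2 (t / T) := Nat.floor_le hlog0
  have h2 : Real.logb 2 (t / T) < (n:ℝ) + 1 := Nat.lt_floor_add_one _
  have htTpos : 0 < t / T := by positivity
  have hlow : (2:ℝ) ^ (n:ℝ) ≤ t / T := by
    calc (2:ℝ) ^ (n:ℝ) ≤ (2:ℝ) ^ Real.logb 2 (t / T) :=
      Real.rpow_le_rpow_of_exponent_le (by norm_num) h1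
    _ = t / T := Real.rpow_logb (by norm_num) (by norm_num) htTpos
  have hhigh : t / T < (2:ℝ) ^ ((n:ℝ) + 1) := by
    calc t / T = (2:ℝ) ^ Real.logb 2 (t / T) :=
      (Real.rpow_logb (by norm_num) (by norm_num) htTpos).symm
    _ < (2:ℝ) ^ ((n:ℝ) + 1) := Real.rpow_lt_rpow_of_exponent_lt (by norm_num) h2
  have h2nT : 2 ^ n * T ≤ t := by
    rw [← Real.rpow_natCast (2:ℝ) n]
    calc (2:ℝ) ^ (n:ℝ) * T ≤ (t / T) * T := by
          exact mul_le_mul_of_nonneg_right hlow hT.le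
    _ = t := div_mul_cancel₀ t hT.ne'
  have hq : t / (2 * T) ≤ (2:ℝ) ^ (n:ℝ) := by
    rw [div_le_iff₀ (by positivity)]
    have : ((2:ℝ) ^ ((n:ℝ) + 1)) = 2 ^ (n:ℝ) * 2 := by
      rw [Real.rpow_add (by norm_num), Real.rpow_one]
    nlinarith [hhigh, hT, (div_le_iff₀ hT).1 (le_of_lt hhigh)]
  have hrn : r ^ n ≤ (t / (2 * T)) ^ e := by
    have : r ^ n = ((2:ℝ) ^ (n:ℝ)) ^ e := by
      rw [← Real.rpow_natCast r n, ← h2e,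
        ← Real.rpow_mul (by norm_num : (0:ℝ) ≤ 2) e (n:ℝ), mul_comm,
        Real.rpow_mul (by norm_num : (0:ℝ) ≤ 2)]
    rw [this]
    exact Real.rpow_le_rpow_of_nonpos (by positivity) hq he0.le
  have hfinal : S t ≤ r ^ n * S T := (hanti h2nT).trans (pow_le n)
  calc S t ≤ r ^ n * S T := hfinal
  _ ≤ (t / (2 * T)) ^ e * S T := mul_le_mul_of_nonneg_right hrn hST
  _ = (S T * (2 * T) ^ (-e)) * t ^ e := by
      rw [Real.div_rpow ht0.le (by positivity), Real.rpow_neg (by positivity)]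
      field_simp


set_option maxHeartbeats 1000000 in
/-- eventual suboptimality of increasing the limit when the mean is
finite: if `S_Y(t) = l(t)·t^{−1/γ}` with `γ ∈ (0, 1)` and `l` slowly varying (so that
`π⁺ = E[Y] < ∞`), and `f′(π⁺) > 0`, `L′(1 − f(π⁺)) > 0`, then the objective `𝔏` is
strictly decreasing on some half-line `[s₀, ∞)`. -/
theorem statement8 {Ω : Type*} [MeasurableSpace Ω]
    (μ : Measure Ω) [IsProbabilityMeasure μ]
    (Y : Ω → ℝ) (hY : Measurable Y)
    (p : ℝ → ℝ) (hpcont : ContinuousOn p (Ioi 0)) (hpnn : ∀ t, 0 ≤ p t)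
    (hdens : μ.map Y
      = (volume.restrict (Ioi (0:ℝ))).withDensity (fun t => ENNReal.ofReal (p t)))
    (γ : ℝ) (hγ : γ ∈ Ioo (0:ℝ) 1)
    (l : ℝ → ℝ) (hlpos : ∀ t, 0 < t → 0 < l t)
    (hsv : ∀ h : ℝ, 0 < h → Tendsto (fun t => l (h * t) / l t) atTop (nhds 1))
    (hSform : ∀ t, 0 < t → survival μ Y t = l t * t ^ (-(1 / γ)))
    (L : ℝ → ℝ) (hL : ContDiff ℝ 1 L) (hLmono : Monotone L)
    (hLbdd : ∃ M, ∀ x, |L x| ≤ M) (hL'bdd : ∃ M, ∀ x, |deriv L x| ≤ M)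
    (f : ℝ → ℝ) (hf : ContDiff ℝ 1 f) (hfmono : Monotone f)
    (hf' : deriv f (∫ ω, Y ω ∂μ) > 0)
    (hL' : deriv L (1 - f (∫ ω, Y ω ∂μ)) > 0) :
    ∃ s₀ > (0:ℝ), StrictAntiOn (cappedObjective μ Y L f) (Ici s₀) := by
  obtain ⟨hγ0, hγ1⟩ := hγ
  have hinv : 1 < 1/γ := (one_lt_div hγ0).2 hγ1
  set β : ℝ := (1/γ + 1)/2 with hβdef
  have hβ1 : 1 < β := by rw [hβdef]; linarith
  have hβγ : β < 1/γ := by rw [hβdef]; linarith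
  set r : ℝ := (2:ℝ) ^ (-β) with hrdef
  have hr0 : 0 < r := Real.rpow_pos_of_pos two_pos _
  have hr1 : r < 1 := Real.rpow_lt_one_of_one_lt_of_neg one_lt_two (by linarith)
  have hlogr : Real.logb 2 r = -β := Real.logb_rpow (by norm_num) (by norm_num)
  have he1 : Real.logb 2 r < -1 := by rw [hlogr]; linarith
  set e : ℝ := Real.logb 2 r with hedef
  have he0 : e < 0 := lt_trans he1 (by norm_num)
  -- basic facts about the survival function
  have hSanti := survival_antitone μ Y
  have hSnn := survival_nonneg μ Y
  have hSle1 := survival_le_one μ Y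
  have hSmeas := survival_measurable μ Y
  have hSpos : ∀ t, 0 < t → 0 < survival μ Y t := fun t ht => by
    rw [hSform t ht]; exact mul_pos (hlpos t ht) (Real.rpow_pos_of_pos ht _)
  -- upper and lower doubling bounds for S, eventually
  have hD1 : (1:ℝ) < (2:ℝ) ^ (1/γ - β) :=
    (Real.one_lt_rpow_iff_of_pos two_pos).2 (Or.inl ⟨one_lt_two, by linarith⟩)
  have hUup : ∀ᶠ t in atTop, l (2*t)/l t < (2:ℝ)^(1/γ - β) :=
    (hsv 2 two_pos).eventually_lt_const hD1
  have hUlo : ∀ᶠ t in atTop, (1:ℝ)/2 < l (2*t)/l t :=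
    (hsv 2 two_pos).eventually_const_lt (by norm_num)
  obtain ⟨T₀, hT₀⟩ := eventually_atTop.1 (hUup.and hUlo)
  set T : ℝ := max T₀ 1 with hTdef
  have hT0 : (0:ℝ) < T := lt_of_lt_of_le one_pos (le_max_right _ _)
  set c₀ : ℝ := (2:ℝ)^(-(1/γ)) / 2 with hc₀def
  have hc₀0 : 0 < c₀ := by positivity
  have hdblU : ∀ t, T ≤ t → survival μ Y (2*t) ≤ r * survival μ Y t := by
    intro t ht
    have ht0 : 0 < t := lt_of_lt_of_le hT0 ht
    have hP := hT₀ t (le_trans (le_max_left _ _) ht)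
    have hl2 : l (2*t) ≤ (2:ℝ)^(1/γ - β) * l t := by
      have h1 := hP.1
      rw [div_lt_iff₀ (hlpos t ht0)] at h1; linarith
    have h2t0 : (0:ℝ) < 2*t := by linarith
    rw [hSform _ h2t0, hSform _ ht0]
    have hmul : ((2:ℝ)*t) ^ (-(1/γ)) = (2:ℝ)^(-(1/γ)) * t^(-(1/γ)) :=
      Real.mul_rpow (by norm_num) ht0.le
    rw [hmul]
    have key : (2:ℝ)^(1/γ-β) * (2:ℝ)^(-(1/γ)) = r := by
      rw [← Real.rpow_add two_pos, hrdef]; congr 1; ring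
    calc l (2*t) * ((2:ℝ)^(-(1/γ)) * t^(-(1/γ)))
        ≤ ((2:ℝ)^(1/γ-β) * l t) * ((2:ℝ)^(-(1/γ)) * t^(-(1/γ))) := by
          apply mul_le_mul_of_nonneg_right hl2 (by positivity)
    _ = ((2:ℝ)^(1/γ-β) * (2:ℝ)^(-(1/γ))) * (l t * t^(-(1/γ))) := by ring
    _ = r * (l t * t^(-(1/γ))) := by rw [key]
  have hdblL : ∀ t, T ≤ t → c₀ * survival μ Y t ≤ survival μ Y (2*t) := by
    intro t ht
    have ht0 : 0 < t := lt_of_lt_of_le hT0 ht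
    have hP := hT₀ t (le_trans (le_max_left _ _) ht)
    have hl2 : (1/2) * l t ≤ l (2*t) := by
      have h1 := hP.2
      rw [lt_div_iff₀ (hlpos t ht0)] at h1; linarith
    have h2t0 : (0:ℝ) < 2*t := by linarith
    rw [hSform _ h2t0, hSform _ ht0]
    have hmul : ((2:ℝ)*t) ^ (-(1/γ)) = (2:ℝ)^(-(1/γ)) * t^(-(1/γ)) :=
      Real.mul_rpow (by norm_num) ht0.le
    rw [hmul, hc₀def]
    have htp : (0:ℝ) < t ^ (-(1/γ)) := Real.rpow_pos_of_pos ht0 _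
    have h2p : (0:ℝ) < (2:ℝ) ^ (-(1/γ)) := Real.rpow_pos_of_pos two_pos _
    calc (2:ℝ)^(-(1/γ))/2 * (l t * t^(-(1/γ)))
        = ((1/2) * l t) * ((2:ℝ)^(-(1/γ)) * t^(-(1/γ))) := by ring
    _ ≤ l (2*t) * ((2:ℝ)^(-(1/γ)) * t^(-(1/γ))) := by
        apply mul_le_mul_of_nonneg_right hl2 (by positivity)
  -- polynomial decay of S and integrability
  set C : ℝ := survival μ Y T * (2*T) ^ (-e) with hCdef
  have hdecay : ∀ t, T ≤ t → survival μ Y t ≤ C * t ^ e :=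
    aux_geom_decay hT0 hr0 hr1 hSanti (hSnn T) hdblU
  have hC0 : 0 ≤ C := mul_nonneg (hSnn T) (Real.rpow_pos_of_pos (by linarith) _).le
  have hSint : IntegrableOn (survival μ Y) (Ioi 0) volume := by
    have h1 : IntegrableOn (survival μ Y) (Ioc 0 T) volume := by
      apply Integrable.mono' (integrableOn_const (C := (1:ℝ)) measure_Ioc_lt_top.ne)
        hSmeas.aestronglyMeasurable.restrict
      filter_upwards with t
      rw [Real.norm_eq_abs, abs_of_nonneg (hSnn t)]; exact hSle1 t
    have h2 : IntegrableOn (survival μ Y) (Ioi T) volume := by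
      apply Integrable.mono' ((integrableOn_Ioi_rpow_of_lt he1 hT0).const_mul C)
        hSmeas.aestronglyMeasurable.restrict
      rw [ae_restrict_iff' measurableSet_Ioi]
      filter_upwards with t ht
      rw [Real.norm_eq_abs, abs_of_nonneg (hSnn t)]
      exact hdecay t ht.le
    have := h1.union h2
    rwa [Ioc_union_Ioi_eq_Ioi hT0.le] at this
  -- the mean
  have hY0 := Y_pos_ae μ Y hY p hdens
  obtain ⟨hYint, hmean⟩ := mean_eq_integral_survival μ Y hY hY0 hSint
  set I : ℝ := ∫ t in Ioi (0:ℝ), survival μ Y t with hIdef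
  rw [hmean] at hf' hL'
  -- premium converges to the mean
  have htail_bound : ∀ s, T ≤ s → I - cappedPremium μ Y s ≤ C * (-s^(e+1)/(e+1)) := by
    intro s hs
    have hs0 : 0 < s := lt_of_lt_of_le hT0 hs
    rw [premium_tail μ Y hs0 hSint]
    have hmono := setIntegral_mono_on (μ := volume) (s := Ioi s)
      (f := survival μ Y) (g := fun t => C * t ^ e)
      (hSint.mono_set (Ioi_subset_Ioi hs0.le))
      ((integrableOn_Ioi_rpow_of_lt he1 hs0).const_mul C) measurableSet_Ioi
      (fun t ht => hdecay t (le_trans hs ht.le))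
    calc ∫ t in Ioi s, survival μ Y t ≤ ∫ t in Ioi s, C * t ^ e := hmono
    _ = C * ∫ t in Ioi s, t ^ e := by rw [integral_const_mul]
    _ = C * (-s^(e+1)/(e+1)) := by rw [integral_Ioi_rpow_of_lt he1 hs0]
  have hφ : Tendsto (fun s : ℝ => C * (-s^(e+1)/(e+1))) atTop (𝓝 0) := by
    have h1 : Tendsto (fun s:ℝ => s ^ (e+1)) atTop (𝓝 0) := by
      have h2 := tendsto_rpow_neg_atTop (y := -(e+1)) (by linarith)
      simpa using h2
    have h3 := h1.const_mul (C * (-1/(e+1)))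
    rw [mul_zero] at h3
    convert h3 using 2 with s
    ring
  have hπtend : Tendsto (cappedPremium μ Y) atTop (𝓝 I) := by
    have hlo : Tendsto (fun s : ℝ => I - C * (-s^(e+1)/(e+1))) atTop (𝓝 I) := by
      have := tendsto_const_nhds (x := I) (f := atTop (α := ℝ)) |>.sub hφ
      simpa using this
    apply tendsto_of_tendsto_of_tendsto_of_le_of_le' hlo tendsto_const_nhds
    · filter_upwards [eventually_ge_atTop T] with s hs
      have := htail_bound s hs; linarith
    · filter_upwards [eventually_ge_atTop T] with s hs
      exact premium_le μ Y s hSint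
  -- derivative windows
  obtain ⟨δf, hδf0, hwf⟩ := aux_deriv_window hf (half_lt_self hf')
  obtain ⟨δL, hδL0, hwL⟩ := aux_deriv_window hL (half_lt_self hL')
  set a : ℝ := deriv f I / 2 with hadef
  set b : ℝ := deriv L (1 - f I) / 2 with hbdef
  have ha0 : 0 < a := half_pos hf'
  have hb0 : 0 < b := half_pos hL'
  obtain ⟨M', hM'⟩ := hL'bdd
  have hM'0 : 0 ≤ M' := le_trans (abs_nonneg _) (hM' 0)
  obtain ⟨ML, hML⟩ := hLbdd
  -- eventual conditions
  have hfπtend : Tendsto (fun s => f (cappedPremium μ Y s)) atTop (𝓝 (f I)) :=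
    (hf.continuous.tendsto I).comp hπtend
  have E1 : ∀ᶠ s in atTop, I - δf < cappedPremium μ Y s :=
    hπtend.eventually_const_lt (by linarith)
  have E2 : ∀ᶠ s in atTop, f I - δL < f (cappedPremium μ Y s) :=
    hfπtend.eventually_const_lt (by linarith)
  have E3 : ∀ᶠ s in atTop, survival μ Y s ≤ 1/2 := by
    have hCs : Tendsto (fun s:ℝ => C * s ^ e) atTop (𝓝 0) := by
      have h1 := tendsto_rpow_neg_atTop (y := -e) (by linarith)
      have h2 := (h1.const_mul C)
      rw [mul_zero] at h2
      simpa using h2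
    filter_upwards [hCs.eventually_lt_const (show (0:ℝ) < 1/2 by norm_num),
      eventually_ge_atTop T] with s h1 h2
    exact le_trans (hdecay s h2) h1.le
  obtain ⟨s₀', hs₀'⟩ := eventually_atTop.1 ((E1.and E2).and E3)
  set s₀ : ℝ := max (max s₀' T) (2*M'/(a*b*c₀) + 1) with hs₀def
  have hs₀T : T ≤ s₀ := le_trans (le_max_right s₀' T) (le_max_left _ _)
  have hs₀s₀' : s₀' ≤ s₀ := le_trans (le_max_left s₀' T) (le_max_left _ _)
  have hs₀M : 2*M'/(a*b*c₀) + 1 ≤ s₀ := le_max_right _ _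
  have hs₀pos : 0 < s₀ := lt_of_lt_of_le hT0 hs₀T
  refine ⟨s₀, hs₀pos, ?_⟩
  apply aux_strictAntiOn hs₀pos
  intro s₁ s₂ hs₁ h12 h2le
  -- Final computation: ∀ s₀ ≤ s₁ < s₂ ≤ 2s₁, 𝔏(s₂) < 𝔏(s₁)
  have hs₁0 : 0 < s₁ := lt_of_lt_of_le hs₀pos hs₁
  have hs₂0 : 0 < s₂ := lt_trans hs₁0 h12
  have hs₂s₀ : s₀ ≤ s₂ := le_trans hs₁ h12.le
  obtain ⟨⟨hE1a, hE2a⟩, hE3a⟩ := hs₀' s₁ (le_trans hs₀s₀' hs₁)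
  obtain ⟨⟨hE1b, hE2b⟩, hE3b⟩ := hs₀' s₂ (le_trans hs₀s₀' hs₂s₀)
  set π₁ : ℝ := cappedPremium μ Y s₁ with hπ₁def
  set π₂ : ℝ := cappedPremium μ Y s₂ with hπ₂def
  have hπ₁I : π₁ ≤ I := premium_le μ Y s₁ hSint
  have hπ₂I : π₂ ≤ I := premium_le μ Y s₂ hSint
  have hJlb : (s₂ - s₁) * survival μ Y s₂ ≤ ∫ t in Ioc s₁ s₂, survival μ Y t :=
    integral_Ioc_S_lb μ Y hs₁0 h12.le hSint
  have hsplitπ : π₂ = π₁ + ∫ t in Ioc s₁ s₂, survival μ Y t :=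
    premium_split μ Y hs₁0 h12.le hSint
  have hSs₂nn : 0 ≤ survival μ Y s₂ := hSnn s₂
  have h00 : 0 ≤ (s₂ - s₁) * survival μ Y s₂ :=
    mul_nonneg (by linarith only [h12]) hSs₂nn
  have hπ12 : π₁ ≤ π₂ := by linarith only [h00, hJlb, hsplitπ]
  have hπdiff : a * (π₂ - π₁) ≤ f π₂ - f π₁ :=
    hwf π₁ π₂ ⟨by linarith only [hE1a], by linarith only [hπ₁I, hδf0]⟩
      ⟨by linarith only [hE1b], by linarith only [hπ₂I, hδf0]⟩ hπ12
  set c₁ : ℝ := f π₁ with hc₁def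
  set c₂ : ℝ := f π₂ with hc₂def
  have hc12 : c₁ ≤ c₂ := hfmono hπ12
  have hc₁I : c₁ ≤ f I := hfmono hπ₁I
  have hc₂I : c₂ ≤ f I := hfmono hπ₂I
  set x₁ : ℝ := 1 - c₁ with hx₁def
  set x₂ : ℝ := 1 - c₂ with hx₂def
  have hx₁mem : x₁ ∈ Icc ((1 - f I) - δL) ((1 - f I) + δL) :=
    ⟨by rw [hx₁def]; linarith only [hc₁I, hδL0], by rw [hx₁def]; linarith only [hE2a]⟩
  have hx₂mem : x₂ ∈ Icc ((1 - f I) - δL) ((1 - f I) + δL) :=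
    ⟨by rw [hx₂def]; linarith only [hc₂I, hδL0], by rw [hx₂def]; linarith only [hE2b]⟩
  have hx21 : x₂ ≤ x₁ := by rw [hx₁def, hx₂def]; linarith only [hc12]
  have hLdrop : b * (x₁ - x₂) ≤ L x₁ - L x₂ := hwL x₂ x₁ hx₂mem hx₁mem hx21
  have hSdbl : c₀ * survival μ Y s₁ ≤ survival μ Y s₂ := by
    have h1 := hdblL s₁ (le_trans hs₀T hs₁)
    have h2 : survival μ Y (2*s₁) ≤ survival μ Y s₂ := hSanti h2le
    linarith only [h1, h2]
  have hSs₁pos : 0 < survival μ Y s₁ := hSpos s₁ hs₁0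
  have hs₁M : 2*M'/(a*b*c₀) < s₁ := by linarith only [hs₀M, hs₁]
  -- integrability of the objective integrands
  have hgmeas : ∀ s : ℝ,
      Measurable (fun ω => L (min (Y ω) s / Y ω - f (cappedPremium μ Y s))) :=
    fun s => hL.continuous.measurable.comp
      (((hY.min measurable_const).div hY).sub measurable_const)
  have hgint : ∀ s : ℝ,
      Integrable (fun ω => L (min (Y ω) s / Y ω - f (cappedPremium μ Y s))) μ := by
    intro s
    apply Integrable.mono' (integrable_const ML) (hgmeas s).aestronglyMeasurable
    filter_upwards with ω
    rw [Real.norm_eq_abs]; exact hML _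
  set E : Set Ω := {ω | Y ω ≤ s₁} with hEdef
  have hE : MeasurableSet E := measurableSet_le hY measurable_const
  have hdiffint : Integrable
      (fun ω => L (min (Y ω) s₂ / Y ω - c₂) - L (min (Y ω) s₁ / Y ω - c₁)) μ :=
    (hgint s₂).sub (hgint s₁)
  have htot : cappedObjective μ Y L f s₂ - cappedObjective μ Y L f s₁
      = ∫ ω, (L (min (Y ω) s₂ / Y ω - c₂) - L (min (Y ω) s₁ / Y ω - c₁)) ∂μ := by
    rw [integral_sub (hgint s₂) (hgint s₁)]; rfl
  have hsum := integral_add_compl hE hdiffint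
  have hEmeasval : (μ E).toReal = 1 - survival μ Y s₁ := compl_toReal μ Y hY
  have hEcval : (μ Eᶜ).toReal = survival μ Y s₁ := by
    have hc : Eᶜ = {ω | s₁ < Y ω} := by ext ω; simp [hEdef, not_le]
    rw [hc]; rfl
  have hconst : ∫ ω in E, (L (min (Y ω) s₂ / Y ω - c₂) - L (min (Y ω) s₁ / Y ω - c₁)) ∂μ
      = (L x₂ - L x₁) * (1 - survival μ Y s₁) := by
    have hae : ∀ᵐ ω ∂μ, ω ∈ E →
        (L (min (Y ω) s₂ / Y ω - c₂) - L (min (Y ω) s₁ / Y ω - c₁)) = L x₂ - L x₁ := by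
      filter_upwards [hY0] with ω hω hmem
      have hY₁ : Y ω ≤ s₁ := hmem
      rw [min_eq_left (le_trans hY₁ h12.le), min_eq_left hY₁, div_self (ne_of_gt hω),
        hx₁def, hx₂def]
    rw [setIntegral_congr_ae hE hae, setIntegral_const, smul_eq_mul, measureReal_def, hEmeasval, mul_comm]
  have hcompl : ∫ ω in Eᶜ, (L (min (Y ω) s₂ / Y ω - c₂) - L (min (Y ω) s₁ / Y ω - c₁)) ∂μ
      ≤ (M' * ((s₂ - s₁)/s₁)) * survival μ Y s₁ := by
    have hbd : ∀ ω ∈ Eᶜ, (L (min (Y ω) s₂ / Y ω - c₂) - L (min (Y ω) s₁ / Y ω - c₁))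
        ≤ M' * ((s₂ - s₁)/s₁) := by
      intro ω hω
      have hYs₁ : s₁ < Y ω := not_le.1 hω
      have hYpos : 0 < Y ω := lt_trans hs₁0 hYs₁
      have hmin1 : min (Y ω) s₁ = s₁ := min_eq_right hYs₁.le
      have hminlb : s₁ ≤ min (Y ω) s₂ := le_min hYs₁.le (by linarith only [h12])
      have hminub : min (Y ω) s₂ ≤ s₂ := min_le_right _ _
      have hd : min (Y ω) s₂ / Y ω - min (Y ω) s₁ / Y ω ≤ (s₂ - s₁)/s₁ := by
        rw [hmin1, div_sub_div_same]
        exact div_le_div₀ (by linarith only [h12]) (by linarith only [hminub]) hs₁0 hYs₁.le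
      have hrhs : 0 ≤ M' * ((s₂ - s₁)/s₁) :=
        mul_nonneg hM'0 (div_nonneg (by linarith only [h12]) hs₁0.le)
      rcases le_or_gt (min (Y ω) s₂ / Y ω - c₂) (min (Y ω) s₁ / Y ω - c₁) with hcase | hcase
      · have hmono' := hLmono hcase
        linarith only [hmono', hrhs]
      · have hlip := aux_lipschitz hL hM'
          (min (Y ω) s₂ / Y ω - c₂) (min (Y ω) s₁ / Y ω - c₁)
        have habs : |(min (Y ω) s₂ / Y ω - c₂) - (min (Y ω) s₁ / Y ω - c₁)|
            = (min (Y ω) s₂ / Y ω - c₂) - (min (Y ω) s₁ / Y ω - c₁) :=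
          abs_of_pos (by linarith only [hcase])
        have hgap : (min (Y ω) s₂ / Y ω - c₂) - (min (Y ω) s₁ / Y ω - c₁) ≤ (s₂ - s₁)/s₁ := by
          linarith only [hd, hc12]
        calc L (min (Y ω) s₂ / Y ω - c₂) - L (min (Y ω) s₁ / Y ω - c₁)
            ≤ M' * |(min (Y ω) s₂ / Y ω - c₂) - (min (Y ω) s₁ / Y ω - c₁)| := hlip
        _ = M' * ((min (Y ω) s₂ / Y ω - c₂) - (min (Y ω) s₁ / Y ω - c₁)) := by rw [habs]
        _ ≤ M' * ((s₂ - s₁)/s₁) := mul_le_mul_of_nonneg_left hgap hM'0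
    have hmono := setIntegral_mono_on hdiffint.integrableOn
      (integrableOn_const (measure_lt_top μ _).ne) hE.compl hbd
    rw [setIntegral_const, smul_eq_mul, measureReal_def, hEcval] at hmono
    calc ∫ ω in Eᶜ, (L (min (Y ω) s₂ / Y ω - c₂) - L (min (Y ω) s₁ / Y ω - c₁)) ∂μ
        ≤ survival μ Y s₁ * (M' * ((s₂ - s₁)/s₁)) := hmono
    _ = (M' * ((s₂ - s₁)/s₁)) * survival μ Y s₁ := mul_comm _ _
  -- numeric conclusion
  have hKle : a*b*(s₂-s₁)*(c₀*survival μ Y s₁) ≤ a*b*(s₂-s₁)*survival μ Y s₂ :=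
    mul_le_mul_of_nonneg_left hSdbl
      (mul_nonneg (mul_nonneg ha0.le hb0.le) (by linarith only [h12]))
  have hLx : L x₂ - L x₁ ≤ -(a*b*(s₂-s₁)*survival μ Y s₂) := by
    have h2 : (s₂-s₁) * survival μ Y s₂ ≤ π₂ - π₁ := by linarith only [hJlb, hsplitπ]
    have h1 : a * ((s₂ - s₁) * survival μ Y s₂) ≤ c₂ - c₁ := by
      calc a * ((s₂ - s₁) * survival μ Y s₂) ≤ a * (π₂ - π₁) :=
        mul_le_mul_of_nonneg_left h2 ha0.le
      _ ≤ c₂ - c₁ := hπdiff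
    have h3 : b * (c₂ - c₁) ≤ L x₁ - L x₂ := by
      have h3' : x₁ - x₂ = c₂ - c₁ := by rw [hx₁def, hx₂def]; ring
      rw [← h3']; exact hLdrop
    have h5 : b * (a * ((s₂ - s₁) * survival μ Y s₂)) ≤ b * (c₂ - c₁) :=
      mul_le_mul_of_nonneg_left h1 hb0.le
    have h6 : b * (a * ((s₂ - s₁) * survival μ Y s₂)) = a*b*(s₂-s₁)*survival μ Y s₂ := by
      ring
    linarith only [h3, h5, h6]
  have hKnn : 0 ≤ a*b*(s₂-s₁)*survival μ Y s₂ :=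
    mul_nonneg (mul_nonneg (mul_nonneg ha0.le hb0.le) (by linarith only [h12])) hSs₂nn
  have hhalf : (L x₂ - L x₁) * (1 - survival μ Y s₁)
      ≤ -(a*b*(s₂-s₁)*survival μ Y s₂) * (1/2) := by
    have hm1 : 1/2 ≤ 1 - survival μ Y s₁ := by linarith only [hE3a]
    have step1 : (L x₂ - L x₁) * (1 - survival μ Y s₁)
        ≤ -(a*b*(s₂-s₁)*survival μ Y s₂) * (1 - survival μ Y s₁) :=
      mul_le_mul_of_nonneg_right hLx (by linarith only [hm1])
    have step2 : -(a*b*(s₂-s₁)*survival μ Y s₂) * (1 - survival μ Y s₁)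
        ≤ -(a*b*(s₂-s₁)*survival μ Y s₂) * (1/2) :=
      mul_le_mul_of_nonpos_left hm1 (by linarith only [hKnn])
    linarith only [step1, step2]
  have habc : 0 < a*b*c₀ := by positivity
  have hq : M'/s₁ < a*b*c₀/2 := by
    rw [div_lt_div_iff₀ hs₁0 (by norm_num : (0:ℝ) < 2)]
    rw [div_lt_iff₀ habc] at hs₁M
    linarith only [hs₁M]
  have hDP : 0 < (s₂ - s₁) * survival μ Y s₁ :=
    mul_pos (by linarith only [h12]) hSs₁pos
  have hprod2 : (M'/s₁)*((s₂-s₁)*survival μ Y s₁)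
      < (a*b*c₀/2)*((s₂-s₁)*survival μ Y s₁) :=
    mul_lt_mul_of_pos_right hq hDP
  have heqB : (M' * ((s₂ - s₁)/s₁)) * survival μ Y s₁
      = (M'/s₁)*((s₂-s₁)*survival μ Y s₁) := by ring
  have hKeq : -(a*b*(s₂-s₁)*(c₀*survival μ Y s₁)) * (1/2)
      + (a*b*c₀/2)*((s₂-s₁)*survival μ Y s₁) = 0 := by ring
  have hfinal : cappedObjective μ Y L f s₂ - cappedObjective μ Y L f s₁ < 0 := by
    rw [htot, ← hsum]
    calc (∫ ω in E, (L (min (Y ω) s₂ / Y ω - c₂) - L (min (Y ω) s₁ / Y ω - c₁)) ∂μ)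
        + ∫ ω in Eᶜ, (L (min (Y ω) s₂ / Y ω - c₂) - L (min (Y ω) s₁ / Y ω - c₁)) ∂μ
        ≤ (L x₂ - L x₁) * (1 - survival μ Y s₁) + (M' * ((s₂ - s₁)/s₁)) * survival μ Y s₁ := by
          rw [hconst]; linarith only [hcompl]
    _ < 0 := by linarith only [hhalf, hKle, hprod2, heqB, hKeq]
  linarith only [hfinal]
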